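/- Postselected teleportation preserves entanglement: let α be a finite type and Ψ : α × Fin 2 → ℂ a joint state of an ancilla register A and a qubit q. Let Φ : α × Fin 2 × Fin 2 × Fin 2 → ℂ be the state obtained from Ψ ⊗ EPR (the EPR pair occupying fresh qubits r₁, r₂) by applying B† to the pair (q, r₁) and the identity elsewhere. Then the postselected component (a, c) ↦ Φ(a, 0, 0, c) equals (1/2)·Ψ; i.e., when the Bell measurement outcome on (q, r₁) is 00, the original joint state of A and q is reproduced exactly (entanglement included) on A and r₂, scaled by 1/2. -/
import Mathlib


open Matrix Kronecker

noncomputable def Hgate : Matrix (Fin 2) (Fin 2) ℂ :=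
  ((1 / Real.sqrt 2 : ℝ) : ℂ) • !![1, 1; 1, -1]

/-- The CNOT gate: `CNOT(|a⟩⊗|b⟩) = |a⟩⊗|a⊕b⟩`. -/
def CNOT : Matrix (Fin 2 × Fin 2) (Fin 2 × Fin 2) ℂ :=
  fun p q => if p = (q.1, q.1 + q.2) then 1 else 0

/-- The Bell gate `B = CNOT * (H ⊗ I₂)`. -/
noncomputable def Bgate : Matrix (Fin 2 × Fin 2) (Fin 2 × Fin 2) ℂ :=
  CNOT * (Hgate ⊗ₖ (1 : Matrix (Fin 2) (Fin 2) ℂ))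

/-- `B†`, the conjugate transpose of the Bell gate. -/
noncomputable def Bdag : Matrix (Fin 2 × Fin 2) (Fin 2 × Fin 2) ℂ := Bgateᴴ

/-- The computational basis state `|a⟩` of one qubit. -/
def ket (a : Fin 2) : Fin 2 → ℂ := fun i => if i = a then 1 else 0

/-- The EPR state `B(|0⟩⊗|0⟩) = (|00⟩+|11⟩)/√2`. -/
noncomputable def EPR : Fin 2 × Fin 2 → ℂ :=
  Bgate.mulVec fun p => ket 0 p.1 * ket 0 p.2

/-- The state obtained from `Ψ ⊗ EPR` (with the EPR pair on fresh qubits `r₁, r₂`)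
by applying `B†` to the pair `(q, r₁)` and the identity elsewhere.  Coordinates
are `(a, q, r₁, r₂)`. -/
noncomputable def teleported {α : Type*} [Fintype α] (Ψ : α × Fin 2 → ℂ) :
    α × Fin 2 × Fin 2 × Fin 2 → ℂ :=
  fun x => ∑ y : Fin 2 × Fin 2,
    Bdag (x.2.1, x.2.2.1) y * (Ψ (x.1, y.1) * EPR (y.2, x.2.2.2))

/-- Postselected teleportation preserves entanglement: the component of the
teleported state in which the Bell measurement outcome on `(q, r₁)` is `00`,
regarded as a joint state of the ancilla register and `r₂`, equals `(1/2)·Ψ`. -/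
theorem postselected_teleportation {α : Type*} [Fintype α] (Ψ : α × Fin 2 → ℂ) :
    (fun p : α × Fin 2 => teleported Ψ (p.1, 0, 0, p.2)) = (1 / 2 : ℂ) • Ψ := by
  have h2 : ((Real.sqrt 2 : ℝ) : ℂ) * ((Real.sqrt 2 : ℝ) : ℂ) = 2 := by
    norm_cast
    exact Real.mul_self_sqrt (by norm_num)
  funext p
  obtain ⟨a, c⟩ := p
  simp only [teleported, Bdag, Bgate, EPR, CNOT, Hgate, ket, Matrix.mul_apply,
    Matrix.mulVec, Matrix.conjTranspose_apply, Matrix.kroneckerMap_apply,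
    Fintype.sum_prod_type, Fin.sum_univ_two, Matrix.one_apply, dotProduct,
    Pi.smul_apply, smul_eq_mul, Matrix.smul_apply]
  fin_cases c <;>
    simp <;> push_cast <;> ring_nf <;>
    rw [sq, ← mul_inv, h2] <;> ring
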